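/- Let C ⊆ ℝ^n be a pointed cone of dimension d ≥ 1 generated by finitely many vectors. Then there exist vectors r^{s+1},...,r^t among the standard basis vectors e^1,...,e^n, with t - s = n - d, such that C' = cone(C ∪ {r^{s+1},...,r^t}) is full-dimensional and pointed. -/

import Mathlib

open Finset

/-- Conic hull of a set of vectors. -/
def coneHull {n : ℕ} (S : Set (Fin n → ℝ)) : Set (Fin n → ℝ) :=
  {x | ∃ (k : ℕ) (μ : Fin k → ℝ) (y : Fin k → (Fin n → ℝ)),
    (∀ i, 0 ≤ μ i) ∧ (∀ i, y i ∈ S) ∧ x = ∑ i, μ i • y i}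

lemma coneHull.zero_mem {n : ℕ} (S : Set (Fin n → ℝ)) : 0 ∈ coneHull S :=
  ⟨0, Fin.elim0, Fin.elim0, fun i => i.elim0, fun i => i.elim0, by simp⟩

lemma coneHull.mem_of_mem {n : ℕ} {S : Set (Fin n → ℝ)} {x : Fin n → ℝ} (h : x ∈ S) :
    x ∈ coneHull S :=
  ⟨1, fun _ => 1, fun _ => x, fun _ => zero_le_one, fun _ => h, by simp⟩

lemma coneHull.smul_mem {n : ℕ} {S : Set (Fin n → ℝ)} {c : ℝ} (hc : 0 ≤ c)
    {x : Fin n → ℝ} (h : x ∈ coneHull S) : c • x ∈ coneHull S := by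
  obtain ⟨k, μ, y, hμ, hy, rfl⟩ := h
  exact ⟨k, fun i => c * μ i, y, fun i => mul_nonneg hc (hμ i), hy, by
    rw [Finset.smul_sum]; exact Finset.sum_congr rfl fun i _ => (mul_smul c (μ i) (y i)).symm⟩

lemma coneHull.add_mem {n : ℕ} {S : Set (Fin n → ℝ)} {x z : Fin n → ℝ}
    (hx : x ∈ coneHull S) (hz : z ∈ coneHull S) : x + z ∈ coneHull S := by
  obtain ⟨k₁, μ₁, y₁, hμ₁, hy₁, rfl⟩ := hx
  obtain ⟨k₂, μ₂, y₂, hμ₂, hy₂, rfl⟩ := hz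
  refine ⟨k₁ + k₂, Fin.append μ₁ μ₂, Fin.append y₁ y₂, ?_, ?_, ?_⟩
  · exact fun i => Fin.addCases (fun j => by simpa using hμ₁ j) (fun j => by simpa using hμ₂ j) i
  · exact fun i => Fin.addCases (fun j => by simpa using hy₁ j) (fun j => by simpa using hy₂ j) i
  · rw [Fin.sum_univ_add]
    congr 1 <;> exact Finset.sum_congr rfl fun i _ => by simp

lemma coneHull.subset_span {n : ℕ} (S : Set (Fin n → ℝ)) :
    coneHull S ⊆ (Submodule.span ℝ S : Set (Fin n → ℝ)) := by
  rintro x ⟨k, μ, y, hμ, hy, rfl⟩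
  exact Submodule.sum_mem _ fun i _ =>
    Submodule.smul_mem _ _ (Submodule.subset_span (hy i))

lemma coneHull.mem_union {n : ℕ} {A B : Set (Fin n → ℝ)} {x : Fin n → ℝ}
    (h : x ∈ coneHull (A ∪ B)) :
    ∃ a ∈ coneHull A, ∃ b ∈ coneHull B, x = a + b := by
  classical
  obtain ⟨k, μ, y, hμ, hy, rfl⟩ := h
  refine ⟨∑ i, if y i ∈ A then μ i • y i else 0, ?_,
          ∑ i, if y i ∈ A then 0 else μ i • y i, ?_, ?_⟩
  · refine Finset.sum_induction _ (· ∈ coneHull A) (fun a b ha hb => coneHull.add_mem ha hb)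
      (coneHull.zero_mem A) fun i _ => ?_
    by_cases hi : y i ∈ A
    · simpa [hi] using coneHull.smul_mem (hμ i) (coneHull.mem_of_mem hi)
    · simpa [hi] using coneHull.zero_mem A
  · refine Finset.sum_induction _ (· ∈ coneHull B) (fun a b ha hb => coneHull.add_mem ha hb)
      (coneHull.zero_mem B) fun i _ => ?_
    by_cases hi : y i ∈ A
    · simpa [hi] using coneHull.zero_mem B
    · have : y i ∈ B := (hy i).resolve_left hi
      simpa [hi] using coneHull.smul_mem (hμ i) (coneHull.mem_of_mem this)
  · rw [← Finset.sum_add_distrib]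
    exact Finset.sum_congr rfl fun i _ => by by_cases hi : y i ∈ A <;> simp [hi]

lemma coneHull.nonneg_coords {n : ℕ} {T : Finset (Fin n)} {u : Fin n → ℝ}
    (h : u ∈ coneHull ((fun i => (Pi.single i 1 : Fin n → ℝ)) '' ↑T)) :
    ∀ j, 0 ≤ u j := by
  obtain ⟨k, μ, y, hμ, hy, rfl⟩ := h
  intro j
  rw [Finset.sum_apply]
  refine Finset.sum_nonneg fun i _ => ?_
  obtain ⟨l, -, hl⟩ := hy i
  have : (0:ℝ) ≤ y i j := by
    rw [← hl]
    by_cases hjl : j = l <;> simp [Pi.single_apply, hjl]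
  exact mul_nonneg (hμ i) this

theorem stmt17 (n s : ℕ) (r : Fin s → (Fin n → ℝ))
    (C : Set (Fin n → ℝ)) (hC : C = coneHull (Set.range r))
    (hpointed : ∀ x ∈ C, -x ∈ C → x = 0)
    (d : ℕ) (hd : d = Module.finrank ℝ (Submodule.span ℝ C)) (hd1 : 1 ≤ d) :
    ∃ T : Finset (Fin n), T.card = n - d ∧
      Submodule.span ℝ
        (coneHull (Set.range r ∪ (fun i => (Pi.single i 1 : Fin n → ℝ)) '' ↑T)) = ⊤ ∧
      (∀ x ∈ coneHull (Set.range r ∪ (fun i => (Pi.single i 1 : Fin n → ℝ)) '' ↑T),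
        -x ∈ coneHull (Set.range r ∪ (fun i => (Pi.single i 1 : Fin n → ℝ)) '' ↑T) →
        x = 0) := by
  classical
  set E : Fin n → (Fin n → ℝ) := fun i => Pi.single i 1 with hE
  set V : Submodule ℝ (Fin n → ℝ) := Submodule.span ℝ (Set.range r) with hV
  -- span of cone equals span of generators
  have hVC : Submodule.span ℝ C = V := by
    rw [hC]
    refine le_antisymm (Submodule.span_le.2 ?_) (Submodule.span_mono
      fun x hx => coneHull.mem_of_mem hx)
    exact (coneHull.subset_span _).trans (by simp [hV])
  have hdV : d = Module.finrank ℝ V := by rw [hd, hVC]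
  -- a basis of V, as a set in ℝⁿ
  let bV : Module.Basis (Fin (Module.finrank ℝ V)) ℝ V := Module.finBasis ℝ V
  have hinj : Function.Injective (fun i => (bV i : Fin n → ℝ)) := by
    have : Function.Injective ((V.subtype : V →ₗ[ℝ] (Fin n → ℝ)) ∘ bV) :=
      V.injective_subtype.comp bV.injective
    exact this
  set s₀ : Set (Fin n → ℝ) := Set.range (fun i => (bV i : Fin n → ℝ)) with hs₀
  have hs₀li : LinearIndependent ℝ ((↑) : s₀ → (Fin n → ℝ)) := by
    have h1 : LinearIndependent ℝ ((V.subtype : V →ₗ[ℝ] (Fin n → ℝ)) ∘ bV) :=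
      bV.linearIndependent.map' V.subtype V.ker_subtype
    exact (linearIndepOn_id_range_iff hinj).mpr h1
  have hs₀span : Submodule.span ℝ s₀ = V := by
    have hr : s₀ = V.subtype '' (Set.range bV) := by rw [hs₀, ← Set.range_comp]; rfl
    rw [hr, Submodule.span_image, bV.span_eq, Submodule.map_subtype_top]
  have hs₀card : s₀.ncard = d := by
    rw [hs₀, ← Set.image_univ, Set.ncard_image_of_injective _ hinj, Set.ncard_univ,
      Nat.card_eq_fintype_card, Fintype.card_fin, hdV]
  -- extend to a basis of ℝⁿ using standard basis vectors
  have hEspan : Submodule.span ℝ (Set.range E) = ⊤ := by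
    have hEe : E = ⇑(Pi.basisFun ℝ (Fin n)) := by funext i; rw [hE]; simp
    rw [hEe, (Pi.basisFun ℝ (Fin n)).span_eq]
  set t : Set (Fin n → ℝ) := s₀ ∪ Set.range E with ht
  have htspan : Submodule.span ℝ t = ⊤ := by
    rw [ht]; rw [eq_top_iff, ← hEspan]
    exact Submodule.span_mono Set.subset_union_right
  set b : Set (Fin n → ℝ) := LinearIndepOn.extend (v := id) hs₀li (Set.subset_union_left (t := Set.range E)) with hb
  have hsub : s₀ ⊆ b := LinearIndepOn.subset_extend (v := id) hs₀li _
  have hbt : b ⊆ t := LinearIndepOn.extend_subset (v := id) hs₀li _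
  have hbli : LinearIndependent ℝ ((↑) : b → (Fin n → ℝ)) :=
    LinearIndepOn.linearIndepOn_extend (v := id) hs₀li _
  have hbspan : Submodule.span ℝ b = ⊤ := by
    rw [hb, LinearIndepOn.span_extend_eq_span hs₀li, ← ht, htspan]
  have hbfin : b.Finite := hbli.set_finite_of_isNoetherian
  have hs₀fin : s₀.Finite := hbfin.subset hsub
  -- b has n elements
  have hbcard : b.ncard = n := by
    have hfin : Fintype b := hbfin.fintype
    let Bb : Module.Basis b ℝ (Fin n → ℝ) :=
      Module.Basis.mk hbli (by rw [Subtype.range_coe, hbspan])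
    have h1 : Module.finrank ℝ (Fin n → ℝ) = Fintype.card b :=
      Module.finrank_eq_card_basis Bb
    have h2 : Module.finrank ℝ (Fin n → ℝ) = n := by
      simp [Module.finrank_pi]
    rw [← Nat.card_coe_set_eq, Nat.card_eq_fintype_card, ← h1, h2]
  -- define T
  set T : Finset (Fin n) := Finset.univ.filter (fun i => E i ∈ b ∧ E i ∉ s₀) with hT
  have hEinj : Function.Injective E := by
    intro i j hij
    by_contra hne
    have := congrFun hij i
    rw [hE] at this
    simp [Pi.single_apply, hne] at this
  have hET : E '' ↑T = b \ s₀ := by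
    ext x
    constructor
    · rintro ⟨i, hi, rfl⟩
      rw [hT] at hi
      simp only [Finset.coe_filter, Set.mem_setOf_eq, Finset.mem_filter] at hi
      exact ⟨hi.2.1, hi.2.2⟩
    · rintro ⟨hxb, hxs⟩
      have : x ∈ Set.range E := by
        rcases hbt hxb with h | h
        · exact absurd h hxs
        · exact h
      obtain ⟨i, rfl⟩ := this
      exact ⟨i, by simp [hT, hxb, hxs], rfl⟩
  have hTcard : T.card = n - d := by
    have h1 : (↑T : Set (Fin n)).ncard = T.card := Set.ncard_coe_finset T
    have h2 : (E '' ↑T).ncard = (↑T : Set (Fin n)).ncard :=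
      Set.ncard_image_of_injective _ hEinj
    rw [← h1, ← h2, hET, Set.ncard_diff hsub hs₀fin, hbcard, hs₀card]
  refine ⟨T, hTcard, ?_, ?_⟩
  -- full-dimensionality
  · have hWV : Submodule.span ℝ (Set.range r ∪ E '' ↑T) = ⊤ := by
      rw [Submodule.span_union, hET, ← hV]
      rw [← hs₀span, ← Submodule.span_union, Set.union_diff_cancel hsub, hbspan]
    refine le_antisymm le_top ?_
    rw [← hWV]
    exact Submodule.span_mono fun x hx => coneHull.mem_of_mem hx
  -- pointedness
  · intro x hx hnx
    obtain ⟨a, ha, u, hu, hxau⟩ := coneHull.mem_union hx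
    obtain ⟨a', ha', u', hu', hxau'⟩ := coneHull.mem_union hnx
    have hdisj : Disjoint V (Submodule.span ℝ (E '' ↑T)) := by
      rw [hET, ← hs₀span]
      have hudisj : Disjoint {y : b | (y : Fin n → ℝ) ∈ s₀} {y : b | (y : Fin n → ℝ) ∉ s₀} := by
        simp [Set.disjoint_left]
      have := hbli.disjoint_span_image hudisj
      have him1 : ((↑) : b → (Fin n → ℝ)) '' {y : b | (y : Fin n → ℝ) ∈ s₀} = s₀ := by
        ext z; constructor
        · rintro ⟨w, hw, rfl⟩; exact hw
        · intro hz; exact ⟨⟨z, hsub hz⟩, hz, rfl⟩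
      have him2 : ((↑) : b → (Fin n → ℝ)) '' {y : b | (y : Fin n → ℝ) ∉ s₀} = b \ s₀ := by
        ext z; constructor
        · rintro ⟨w, hw, rfl⟩; exact ⟨w.2, hw⟩
        · rintro ⟨hz1, hz2⟩; exact ⟨⟨z, hz1⟩, hz2, rfl⟩
      rwa [him1, him2] at this
    have hsum : (a + a') + (u + u') = 0 := by
      have h0 : (a + u) + (a' + u') = 0 := by rw [← hxau, ← hxau']; abel
      calc (a + a') + (u + u') = (a + u) + (a' + u') := by abel
        _ = 0 := h0
    have haV : a + a' ∈ V := by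
      have h1 : a ∈ V := by
        have := coneHull.subset_span (Set.range r) ha; exact this
      have h2 : a' ∈ V := coneHull.subset_span (Set.range r) ha'
      exact V.add_mem h1 h2
    have huW : u + u' ∈ Submodule.span ℝ (E '' ↑T) :=
      (Submodule.span ℝ (E '' ↑T)).add_mem (coneHull.subset_span _ hu)
        (coneHull.subset_span _ hu')
    have haz : a + a' = 0 := by
      have hmem : a + a' ∈ Submodule.span ℝ (E '' ↑T) := by
        rw [eq_neg_of_add_eq_zero_left hsum]; exact neg_mem huW
      exact (Submodule.disjoint_def.mp hdisj) _ haV hmem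
    have huz : u + u' = 0 := by
      have := hsum; rw [haz, zero_add] at this; exact this
    have ha0 : a = 0 := by
      refine hpointed a (by rw [hC]; exact ha) ?_
      rw [hC]
      rw [← eq_neg_of_add_eq_zero_right haz]
      exact ha'
    have hu0 : u = 0 := by
      funext j
      have h1 := coneHull.nonneg_coords hu j
      have h2 := coneHull.nonneg_coords hu' j
      have h3 : u j + u' j = 0 := congrFun huz j
      have : u j = 0 := by linarith
      simpa using this
    rw [hxau, ha0, hu0, add_zero]
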